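/- Suppose the n×n symmetric matrix A satisfies A_{ii}=1 and A_{ij}=A_{ji} ~ Bernoulli(p) independently for i<j (Erdős–Rényi model with self loops), T is a random assignment vector in {0,1}^n independent of A satisfying T_{2m-1}+T_{2m}=1 with (T_{2m-1},T_{2m}) equal to (0,1) or (1,0) with probability 1/2 each, independently across pairs, and n is even. Then E[‖A(1_n - 2T)‖²] = n² p(1-p) + n(1-2p)(1-p). Consequently, lim_{n→∞} E[‖A(1_n - 2T)‖²]/n² = p(1-p). -/

import Mathlib

open MeasureTheory ProbabilityTheory Filter

lemma rdi_sum_range_two_mul (N : ℕ) (g : ℕ → ℝ) :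
    ∑ j ∈ Finset.range (2 * N), g j = ∑ m ∈ Finset.range N, (g (2 * m) + g (2 * m + 1)) := by
  induction N with
  | zero => simp
  | succ n ih =>
    rw [show 2 * (n + 1) = (2 * n + 1) + 1 by ring, Finset.sum_range_succ, Finset.sum_range_succ,
      ih, Finset.sum_range_succ]
    ring

lemma rdi_fin_sum_pair {k : ℕ} (g : Fin (2 * k) → ℝ) :
    ∑ j, g j = ∑ m : Fin k,
      (g ⟨2 * m.val, by have := m.isLt; linarith⟩ + g ⟨2 * m.val + 1, by have := m.isLt; linarith⟩) := by
  have h1 : ∑ j, g j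
      = ∑ j ∈ Finset.range (2 * k), (fun j => if h : j < 2 * k then g ⟨j, h⟩ else 0) j := by
    rw [← Fin.sum_univ_eq_sum_range]
    exact Finset.sum_congr rfl fun j _ => by simp [j.isLt]
  rw [h1, rdi_sum_range_two_mul,
    ← Fin.sum_univ_eq_sum_range (fun m => (fun j => if h : j < 2 * k then g ⟨j, h⟩ else 0) (2 * m)
      + (fun j => if h : j < 2 * k then g ⟨j, h⟩ else 0) (2 * m + 1)) k]
  refine Finset.sum_congr rfl fun m _ => ?_
  have h2 : 2 * m.val < 2 * k := by have := m.isLt; linarith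
  have h3 : 2 * m.val + 1 < 2 * k := by have := m.isLt; linarith
  simp [h2, h3]

lemma rdi_integral01 {Ω : Type*} [MeasurableSpace Ω] (μ : Measure Ω) (X : Ω → ℝ)
    (hX : Measurable X) (hval : ∀ ω, X ω = 0 ∨ X ω = 1) :
    ∫ ω, X ω ∂μ = (μ {ω | X ω = 1}).toReal := by
  have hs : MeasurableSet {ω | X ω = 1} := hX (measurableSet_singleton 1)
  have h : X = Set.indicator {ω | X ω = 1} 1 := by
    funext ω
    rcases hval ω with h | h <;> simp [Set.indicator, h]
  rw [show ∫ ω, X ω ∂μ = ∫ ω, Set.indicator {ω | X ω = 1} 1 ω ∂μ by rw [← h],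
    integral_indicator_one hs]
  rfl

lemma rdi_integrable_of_bounded {Ω : Type*} [MeasurableSpace Ω] {μ : Measure Ω}
    [IsFiniteMeasure μ] {X : Ω → ℝ} (hX : Measurable X) (C : ℝ) (h : ∀ ω, |X ω| ≤ C) :
    Integrable X μ :=
  (integrable_const C).mono' hX.aestronglyMeasurable
    (Filter.Eventually.of_forall (by simpa [Real.norm_eq_abs] using h))

def rdEdge {n : ℕ} (a b : Fin n) (h : a ≠ b) : {q : Fin n × Fin n // q.1 < q.2} :=
  if hab : a < b then ⟨(a, b), hab⟩ else ⟨(b, a), (lt_or_gt_of_ne h).resolve_left hab⟩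

lemma rdEdge_ne {n : ℕ} {a b c : Fin n} (hab : a ≠ b) (hac : a ≠ c) (hbc : b ≠ c) :
    rdEdge a b hab ≠ rdEdge a c hac := by
  unfold rdEdge
  split_ifs with h1 h2 h2 <;>
    · intro h
      rw [Subtype.ext_iff, Prod.ext_iff] at h
      obtain ⟨h3, h4⟩ := h
      first
      | exact hbc h4
      | exact hac h3
      | exact hab h3.symm
      | exact hbc h3

def rdj0 {k : ℕ} (m : Fin k) : Fin (2 * k) := ⟨2 * m.val, by have := m.isLt; linarith⟩
def rdj1 {k : ℕ} (m : Fin k) : Fin (2 * k) := ⟨2 * m.val + 1, by have := m.isLt; linarith⟩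

abbrev rdIdx (k : ℕ) := ({q : Fin (2 * k) × Fin (2 * k) // q.1 < q.2}) ⊕ (Fin k)

def rdAv {k : ℕ} {m' : Fin k}
    (x : {a : rdIdx k // a ∈ Finset.univ.erase (Sum.inr m' : rdIdx k)} → ℝ)
    (a b : Fin (2 * k)) : ℝ :=
  if h : a = b then 1
  else x ⟨Sum.inl (rdEdge a b h),
    Finset.mem_erase_of_ne_of_mem (by simp) (Finset.mem_univ _)⟩

lemma rdAv_measurable {k : ℕ} (m' : Fin k) (a b : Fin (2 * k)) :
    Measurable (fun x : {a : rdIdx k // a ∈ Finset.univ.erase (Sum.inr m' : rdIdx k)} → ℝ =>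
      rdAv x a b) := by
  unfold rdAv
  split_ifs with h
  · exact measurable_const
  · exact measurable_pi_apply _

/-- Random design in the Erdős–Rényi model with self loops on `n = 2k` nodes:
the entries `A_{ij}`, `i < j`, are i.i.d. Bernoulli(p) (symmetric, `A_{ii}=1`),
the assignment pairs `(T_{2m-1}, T_{2m})` equal `(0,1)` or `(1,0)` with
probability `1/2` each, all independent. Then
`E[‖A(1ₙ - 2T)‖²] = n² p (1-p) + n (1-2p)(1-p)`; consequently
`E[‖A(1ₙ - 2T)‖²]/n² → p(1-p)`. -/
theorem random_design_imbalance
    {Ω : Type*} [MeasurableSpace Ω] {μ : Measure Ω} [IsProbabilityMeasure μ]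
    (p : ℝ) (hp : p ∈ Set.Ioo (0 : ℝ) 1) (k : ℕ) (hk : 0 < k)
    (A : Ω → Matrix (Fin (2 * k)) (Fin (2 * k)) ℝ)
    (hAmeas : ∀ i j, Measurable (fun ω => A ω i j))
    (hAdiag : ∀ ω i, A ω i i = 1)
    (hAsym : ∀ ω i j, A ω i j = A ω j i)
    (hAval : ∀ ω i j, i < j → (A ω i j = 0 ∨ A ω i j = 1))
    (hAp : ∀ i j : Fin (2 * k), i < j →
      μ {ω | A ω i j = 1} = ENNReal.ofReal p)
    (T : Ω → Fin (2 * k) → ℝ)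
    (hTmeas : ∀ i, Measurable (fun ω => T ω i))
    (hTval : ∀ ω i, T ω i = 0 ∨ T ω i = 1)
    (hTpair : ∀ ω (m : Fin k),
      T ω ⟨2 * m.val, by have := m.isLt; omega⟩ +
        T ω ⟨2 * m.val + 1, by have := m.isLt; omega⟩ = 1)
    (hThalf : ∀ m : Fin k,
      μ {ω | T ω ⟨2 * m.val, by have := m.isLt; omega⟩ = 1} = 1 / 2)
    (hindep : iIndepFun
      (Sum.elim
        (fun (e : {q : Fin (2 * k) × Fin (2 * k) // q.1 < q.2}) ω =>
          A ω e.val.1 e.val.2)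
        (fun (m : Fin k) ω => T ω ⟨2 * m.val, by have := m.isLt; omega⟩)) μ) :
    (∫ ω, ∑ i, (∑ j, A ω i j * (1 - 2 * T ω j)) ^ 2 ∂μ) =
        ((2 * k : ℝ)) ^ 2 * p * (1 - p) + (2 * k : ℝ) * (1 - 2 * p) * (1 - p) ∧
    Tendsto (fun n : ℕ =>
        ((n : ℝ) ^ 2 * p * (1 - p) + (n : ℝ) * (1 - 2 * p) * (1 - p)) / (n : ℝ) ^ 2)
      atTop (nhds (p * (1 - p))) := by
  obtain ⟨hp0, hp1⟩ := hp
  constructor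
  · -- main computation
    set F : rdIdx k → Ω → ℝ := Sum.elim
        (fun (e : {q : Fin (2 * k) × Fin (2 * k) // q.1 < q.2}) ω => A ω e.val.1 e.val.2)
        (fun (m : Fin k) ω => T ω (rdj0 m)) with hFdef
    have hindepF : iIndepFun F μ := hindep
    have hFmeas : ∀ a, Measurable (F a) := by
      rintro (e | m)
      · exact hAmeas _ _
      · exact hTmeas _
    have hA01 : ∀ ω i j, A ω i j = 0 ∨ A ω i j = 1 := by
      intro ω i j
      rcases lt_trichotomy i j with h | h | h
      · exact hAval ω i j h
      · subst h; exact Or.inr (hAdiag ω i)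
      · rw [hAsym]; exact hAval ω j i h
    have hTpair' : ∀ ω (m : Fin k), T ω (rdj0 m) + T ω (rdj1 m) = 1 := fun ω m => hTpair ω m
    have hThalf' : ∀ m : Fin k, μ {ω | T ω (rdj0 m) = 1} = 1 / 2 := fun m => hThalf m
    set D : Fin (2 * k) → Fin k → Ω → ℝ :=
      fun i m ω => A ω i (rdj0 m) - A ω i (rdj1 m) with hDdef
    set sg : Fin k → Ω → ℝ := fun m ω => 1 - 2 * T ω (rdj0 m) with hsgdef
    have hDmeas : ∀ i m, Measurable (D i m) := fun i m => (hAmeas _ _).sub (hAmeas _ _)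
    have hsgmeas : ∀ m, Measurable (sg m) :=
      fun m => measurable_const.sub ((hTmeas _).const_mul 2)
    have hDabs : ∀ i m ω, |D i m ω| ≤ 1 := by
      intro i m ω
      rcases hA01 ω i (rdj0 m) with h | h <;> rcases hA01 ω i (rdj1 m) with h' | h' <;>
        simp [hDdef, h, h']
    have hsgabs : ∀ m ω, |sg m ω| ≤ 1 := by
      intro m ω
      rcases hTval ω (rdj0 m) with h | h <;> simp [hsgdef, h] <;> norm_num
    have hterm_meas : ∀ (i : Fin (2 * k)) (m m' : Fin k),
        Measurable (fun ω => D i m ω * sg m ω * (D i m' ω * sg m' ω)) :=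
      fun i m m' => (((hDmeas i m).mul (hsgmeas m)).mul ((hDmeas i m').mul (hsgmeas m')))
    have hterm_int : ∀ (i : Fin (2 * k)) (m m' : Fin k),
        Integrable (fun ω => D i m ω * sg m ω * (D i m' ω * sg m' ω)) μ := by
      intro i m m'
      refine rdi_integrable_of_bounded (hterm_meas i m m') 1 fun ω => ?_
      have h1 := hDabs i m ω; have h2 := hsgabs m ω
      have h3 := hDabs i m' ω; have h4 := hsgabs m' ω
      calc |D i m ω * sg m ω * (D i m' ω * sg m' ω)|
          = |D i m ω| * |sg m ω| * (|D i m' ω| * |sg m' ω|) := by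
            rw [abs_mul, abs_mul, abs_mul]
        _ ≤ 1 := by
            apply mul_le_one₀ (mul_le_one₀ h1 (abs_nonneg _) h2)
              (mul_nonneg (abs_nonneg _) (abs_nonneg _))
              (mul_le_one₀ h3 (abs_nonneg _) h4)
    have hTint : ∀ j, Integrable (fun ω => T ω j) μ := by
      intro j
      refine rdi_integrable_of_bounded (hTmeas j) 1 fun ω => ?_
      rcases hTval ω j with h | h <;> simp [h]
    have hAint : ∀ a b, Integrable (fun ω => A ω a b) μ := by
      intro a b
      refine rdi_integrable_of_bounded (hAmeas a b) 1 fun ω => ?_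
      rcases hA01 ω a b with h | h <;> simp [h]
    have hAAint : ∀ (a b c d : Fin (2 * k)),
        Integrable (fun ω => A ω a b * A ω c d) μ := by
      intro a b c d
      refine rdi_integrable_of_bounded ((hAmeas a b).mul (hAmeas c d)) 1 fun ω => ?_
      rcases hA01 ω a b with h | h <;> rcases hA01 ω c d with h' | h' <;> simp [h, h']
    have hsgint : ∀ m, Integrable (sg m) μ :=
      fun m => rdi_integrable_of_bounded (hsgmeas m) 1 (hsgabs m)
    have hsgzero : ∀ m, ∫ ω, sg m ω ∂μ = 0 := by
      intro m
      have h1 : ∫ ω, sg m ω ∂μ = 1 - 2 * ∫ ω, T ω (rdj0 m) ∂μ := by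
        rw [hsgdef]
        rw [integral_sub (integrable_const _) ((hTint _).const_mul 2), integral_const,
          integral_const_mul]
        simp
      rw [h1, rdi_integral01 μ _ (hTmeas _) (fun ω => hTval ω _), hThalf' m]
      norm_num
    have hEA : ∀ a b : Fin (2 * k), a ≠ b → ∫ ω, A ω a b ∂μ = p := by
      intro a b hab
      rw [rdi_integral01 μ _ (hAmeas a b) (fun ω => hA01 ω a b)]
      rcases lt_or_gt_of_ne hab with h | h
      · rw [hAp a b h, ENNReal.toReal_ofReal hp0.le]
      · have hset : {ω | A ω a b = 1} = {ω | A ω b a = 1} := by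
          ext ω; simp [hAsym ω a b]
        rw [hset, hAp b a h, ENNReal.toReal_ofReal hp0.le]
    have hFedge : ∀ (a b : Fin (2 * k)) (hab : a ≠ b),
        (fun ω => A ω a b) = F (Sum.inl (rdEdge a b hab)) := by
      intro a b hab
      funext ω
      show A ω a b = A ω (rdEdge a b hab).val.1 (rdEdge a b hab).val.2
      unfold rdEdge
      split_ifs with h
      · rfl
      · exact hAsym ω a b
    have hEAA : ∀ (a b c : Fin (2 * k)), a ≠ b → a ≠ c → b ≠ c →
        ∫ ω, A ω a b * A ω a c ∂μ = p * p := by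
      intro a b c hab hac hbc
      have hind : IndepFun (fun ω => A ω a b) (fun ω => A ω a c) μ := by
        rw [hFedge a b hab, hFedge a c hac]
        exact hindepF.indepFun (fun h => rdEdge_ne hab hac hbc (Sum.inl.inj h))
      have hmul := hind.integral_mul_eq_mul_integral (hAint a b).aestronglyMeasurable (hAint a c).aestronglyMeasurable
      rw [show (fun ω => A ω a b * A ω a c)
          = (fun ω => A ω a b) * fun ω => A ω a c from rfl]
      rw [hmul, hEA a b hab, hEA a c hac]
    -- off-diagonal terms vanish
    have hzero : ∀ (i : Fin (2 * k)) (m m' : Fin k), m ≠ m' →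
        ∫ ω, D i m ω * sg m ω * (D i m' ω * sg m' ω) ∂μ = 0 := by
      intro i m m' hmm'
      have hmem : (Sum.inr m : rdIdx k) ∈ Finset.univ.erase (Sum.inr m' : rdIdx k) :=
        Finset.mem_erase_of_ne_of_mem (by simpa using hmm') (Finset.mem_univ _)
      have hdisj : Disjoint (Finset.univ.erase (Sum.inr m' : rdIdx k))
          ({Sum.inr m'} : Finset (rdIdx k)) := by simp
      have base := hindepF.indepFun_finset (Finset.univ.erase (Sum.inr m'))
        {Sum.inr m'} hdisj hFmeas
      have hφmeas : Measurable (fun x :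
          {a : rdIdx k // a ∈ Finset.univ.erase (Sum.inr m' : rdIdx k)} → ℝ =>
          (rdAv x i (rdj0 m) - rdAv x i (rdj1 m)) * (1 - 2 * x ⟨Sum.inr m, hmem⟩)
            * (rdAv x i (rdj0 m') - rdAv x i (rdj1 m'))) := by
        exact (((rdAv_measurable m' i (rdj0 m)).sub (rdAv_measurable m' i (rdj1 m))).mul
          (measurable_const.sub ((measurable_pi_apply _).const_mul 2))).mul
          ((rdAv_measurable m' i (rdj0 m')).sub (rdAv_measurable m' i (rdj1 m')))
      have hψmeas : Measurable (fun y :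
          {a : rdIdx k // a ∈ ({Sum.inr m'} : Finset (rdIdx k))} → ℝ =>
          1 - 2 * y ⟨Sum.inr m', Finset.mem_singleton_self _⟩) :=
        measurable_const.sub ((measurable_pi_apply _).const_mul 2)
      have hcomp := base.comp hφmeas hψmeas
      have hav : ∀ (ω : Ω) (a b : Fin (2 * k)),
          rdAv (fun s : {a : rdIdx k // a ∈ Finset.univ.erase (Sum.inr m' : rdIdx k)} =>
            F s.val ω) a b = A ω a b := by
        intro ω a b
        unfold rdAv
        split_ifs with h
        · rw [h, hAdiag]
        · show A ω (rdEdge a b h).val.1 (rdEdge a b h).val.2 = A ω a b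
          unfold rdEdge
          split_ifs with h2
          · rfl
          · exact (hAsym ω a b).symm
      have hind : IndepFun (fun ω => D i m ω * sg m ω * D i m' ω) (sg m') μ := by
        have hXeq : ((fun x :
            {a : rdIdx k // a ∈ Finset.univ.erase (Sum.inr m' : rdIdx k)} → ℝ =>
            (rdAv x i (rdj0 m) - rdAv x i (rdj1 m)) * (1 - 2 * x ⟨Sum.inr m, hmem⟩)
              * (rdAv x i (rdj0 m') - rdAv x i (rdj1 m'))) ∘
            (fun ω (a : {a : rdIdx k // a ∈ Finset.univ.erase (Sum.inr m' : rdIdx k)}) =>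
              F a.val ω))
            = fun ω => D i m ω * sg m ω * D i m' ω := by
          funext ω
          simp only [Function.comp_apply, hav ω]
          rfl
        have hYeq : ((fun y : {a : rdIdx k // a ∈ ({Sum.inr m'} : Finset (rdIdx k))} → ℝ =>
            1 - 2 * y ⟨Sum.inr m', Finset.mem_singleton_self _⟩) ∘
            (fun ω (a : {a : rdIdx k // a ∈ ({Sum.inr m'} : Finset (rdIdx k))}) =>
              F a.val ω)) = sg m' := by
          funext ω; rfl
        rw [← hXeq, ← hYeq]
        exact hcomp
      have hint1 : Integrable (fun ω => D i m ω * sg m ω * D i m' ω) μ := by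
        refine rdi_integrable_of_bounded
          (((hDmeas i m).mul (hsgmeas m)).mul (hDmeas i m')) 1 fun ω => ?_
        have h1 := hDabs i m ω; have h2 := hsgabs m ω; have h3 := hDabs i m' ω
        calc |D i m ω * sg m ω * D i m' ω| = |D i m ω| * |sg m ω| * |D i m' ω| := by
              rw [abs_mul, abs_mul]
          _ ≤ 1 := mul_le_one₀ (mul_le_one₀ h1 (abs_nonneg _) h2) (abs_nonneg _) h3
      calc ∫ ω, D i m ω * sg m ω * (D i m' ω * sg m' ω) ∂μ
          = ∫ ω, (fun ω => D i m ω * sg m ω * D i m' ω) ω * sg m' ω ∂μ := by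
            congr 1; funext ω; ring
        _ = (∫ ω, D i m ω * sg m ω * D i m' ω ∂μ) * ∫ ω, sg m' ω ∂μ := by
            rw [show (fun ω => (fun ω => D i m ω * sg m ω * D i m' ω) ω * sg m' ω)
              = (fun ω => D i m ω * sg m ω * D i m' ω) * sg m' from rfl]
            exact hind.integral_mul_eq_mul_integral hint1.aestronglyMeasurable (hsgint m').aestronglyMeasurable
        _ = 0 := by rw [hsgzero m', mul_zero]
    -- diagonal terms
    have hne01 : ∀ m : Fin k, rdj0 m ≠ rdj1 m := by
      intro m
      simp [rdj0, rdj1, Fin.ext_iff]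
    have hval_diag : ∀ (i : Fin (2 * k)) (m : Fin k),
        ∫ ω, D i m ω * sg m ω * (D i m ω * sg m ω) ∂μ
          = if i = rdj0 m ∨ i = rdj1 m then 1 - p else 2 * p * (1 - p) := by
      intro i m
      have h1 : ∀ ω, D i m ω * sg m ω * (D i m ω * sg m ω)
          = A ω i (rdj0 m) - 2 * (A ω i (rdj0 m) * A ω i (rdj1 m)) + A ω i (rdj1 m) := by
        intro ω
        have hs : sg m ω * sg m ω = 1 := by
          rcases hTval ω (rdj0 m) with h | h <;> simp [hsgdef, h] <;> norm_num
        have ha : A ω i (rdj0 m) * A ω i (rdj0 m) = A ω i (rdj0 m) := by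
          rcases hA01 ω i (rdj0 m) with h | h <;> rw [h] <;> ring
        have hb : A ω i (rdj1 m) * A ω i (rdj1 m) = A ω i (rdj1 m) := by
          rcases hA01 ω i (rdj1 m) with h | h <;> rw [h] <;> ring
        calc D i m ω * sg m ω * (D i m ω * sg m ω)
            = D i m ω * D i m ω * (sg m ω * sg m ω) := by ring
          _ = D i m ω * D i m ω := by rw [hs, mul_one]
          _ = A ω i (rdj0 m) * A ω i (rdj0 m)
              - 2 * (A ω i (rdj0 m) * A ω i (rdj1 m))
              + A ω i (rdj1 m) * A ω i (rdj1 m) := by rw [hDdef]; ring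
          _ = _ := by rw [ha, hb]
      rw [integral_congr_ae (Filter.Eventually.of_forall h1)]
      have hfint : Integrable (fun ω =>
          A ω i (rdj0 m) - 2 * (A ω i (rdj0 m) * A ω i (rdj1 m))) μ :=
        (hAint _ _).sub ((hAAint _ _ _ _).const_mul 2)
      have hgint : Integrable (fun ω => 2 * (A ω i (rdj0 m) * A ω i (rdj1 m))) μ :=
        (hAAint _ _ _ _).const_mul 2
      rw [integral_add hfint (hAint _ _), integral_sub (hAint _ _) hgint, integral_const_mul]
      by_cases h0 : i = rdj0 m
      · subst h0
        rw [if_pos (Or.inl rfl)]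
        have e1 : ∫ ω, A ω (rdj0 m) (rdj0 m) ∂μ = 1 := by
          rw [integral_congr_ae (Filter.Eventually.of_forall fun ω => hAdiag ω (rdj0 m))]
          simp
        have e2 : ∫ ω, A ω (rdj0 m) (rdj0 m) * A ω (rdj0 m) (rdj1 m) ∂μ = p := by
          rw [integral_congr_ae (Filter.Eventually.of_forall fun ω => by
            rw [hAdiag ω (rdj0 m), one_mul])]
          exact hEA _ _ (hne01 m)
        rw [e1, e2, hEA _ _ (hne01 m)]
        ring
      by_cases h1' : i = rdj1 m
      · subst h1'
        rw [if_pos (Or.inr rfl)]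
        have e1 : ∫ ω, A ω (rdj1 m) (rdj1 m) ∂μ = 1 := by
          rw [integral_congr_ae (Filter.Eventually.of_forall fun ω => hAdiag ω (rdj1 m))]
          simp
        have e2 : ∫ ω, A ω (rdj1 m) (rdj0 m) * A ω (rdj1 m) (rdj1 m) ∂μ = p := by
          rw [integral_congr_ae (Filter.Eventually.of_forall fun ω => by
            rw [hAdiag ω (rdj1 m), mul_one])]
          exact hEA _ _ (Ne.symm (hne01 m))
        rw [e1, e2, hEA _ _ (Ne.symm (hne01 m))]
        ring
      · rw [if_neg (by tauto)]
        rw [hEA i _ h0, hEA i _ h1', hEAA i (rdj0 m) (rdj1 m) h0 h1' (hne01 m)]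
        ring
    -- rewrite the integrand
    have hrw : ∀ ω, (∑ i, (∑ j, A ω i j * (1 - 2 * T ω j)) ^ 2)
        = ∑ i, ∑ m, ∑ m', D i m ω * sg m ω * (D i m' ω * sg m' ω) := by
      intro ω
      refine Finset.sum_congr rfl fun i _ => ?_
      have hinner : ∑ j, A ω i j * (1 - 2 * T ω j) = ∑ m, D i m ω * sg m ω := by
        rw [rdi_fin_sum_pair (fun j => A ω i j * (1 - 2 * T ω j))]
        refine Finset.sum_congr rfl fun m _ => ?_
        have hpair := hTpair' ω m
        have hT1 : T ω (rdj1 m) = 1 - T ω (rdj0 m) := by linarith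
        show A ω i (rdj0 m) * (1 - 2 * T ω (rdj0 m))
            + A ω i (rdj1 m) * (1 - 2 * T ω (rdj1 m)) = D i m ω * sg m ω
        rw [hT1, hDdef, hsgdef]
        ring
      rw [hinner, sq, Finset.sum_mul_sum]
    rw [integral_congr_ae (Filter.Eventually.of_forall hrw)]
    rw [integral_finset_sum _ (fun i _ => integrable_finset_sum _ fun m _ =>
      integrable_finset_sum _ fun m' _ => hterm_int i m m')]
    have hswap : ∀ i : Fin (2 * k), ∫ ω, ∑ m, ∑ m', D i m ω * sg m ω * (D i m' ω * sg m' ω) ∂μ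
        = ∑ m, ∑ m', ∫ ω, D i m ω * sg m ω * (D i m' ω * sg m' ω) ∂μ := by
      intro i
      rw [integral_finset_sum _ (fun m _ => integrable_finset_sum _ fun m' _ =>
        hterm_int i m m')]
      exact Finset.sum_congr rfl fun m _ =>
        integral_finset_sum _ fun m' _ => hterm_int i m m'
    have hsingle : ∀ i : Fin (2 * k),
        ∑ m, ∑ m', ∫ ω, D i m ω * sg m ω * (D i m' ω * sg m' ω) ∂μ
          = (k : ℝ) * (2 * p * (1 - p)) + ((1 - p) - 2 * p * (1 - p)) := by
      intro i
      have hdiag1 : ∀ m : Fin k,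
          ∑ m', ∫ ω, D i m ω * sg m ω * (D i m' ω * sg m' ω) ∂μ
            = if i = rdj0 m ∨ i = rdj1 m then 1 - p else 2 * p * (1 - p) := by
        intro m
        rw [Finset.sum_eq_single m
          (fun m' _ hne => hzero i m m' (Ne.symm hne))
          (fun h => absurd (Finset.mem_univ m) h)]
        exact hval_diag i m
      rw [Finset.sum_congr rfl fun m _ => hdiag1 m]
      set m0 : Fin k := ⟨i.val / 2, by have := i.isLt; omega⟩ with hm0
      have hcond : ∀ m : Fin k, (i = rdj0 m ∨ i = rdj1 m) ↔ m = m0 := by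
        intro m
        have h1 := i.isLt
        have h2 := m.isLt
        simp only [rdj0, rdj1, Fin.ext_iff, hm0]
        omega
      have hsplit : ∀ m : Fin k,
          (if i = rdj0 m ∨ i = rdj1 m then (1 - p : ℝ) else 2 * p * (1 - p))
            = 2 * p * (1 - p) + (if m0 = m then (1 - p) - 2 * p * (1 - p) else 0) := by
        intro m
        rcases eq_or_ne m m0 with h | h
        · rw [if_pos ((hcond m).mpr h), if_pos h.symm]; ring
        · rw [if_neg (fun hc => h ((hcond m).mp hc)), if_neg (Ne.symm h)]; ring
      rw [Finset.sum_congr rfl fun m _ => hsplit m, Finset.sum_add_distrib,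
        Finset.sum_const, Finset.sum_ite_eq, if_pos (Finset.mem_univ m0)]
      simp [mul_comm]
    rw [Finset.sum_congr rfl fun i _ => (hswap i).trans (hsingle i), Finset.sum_const]
    simp only [Finset.card_univ, Fintype.card_fin, nsmul_eq_mul]
    push_cast
    ring
  · -- the limit
    have hC := tendsto_const_div_atTop_nhds_zero_nat ((1 - 2 * p) * (1 - p))
    have h := hC.const_add (p * (1 - p))
    rw [add_zero] at h
    refine h.congr' ?_
    filter_upwards [eventually_ge_atTop 1] with n hn
    have hn' : (n : ℝ) ≠ 0 := by
      have : (1 : ℝ) ≤ (n : ℝ) := by exact_mod_cast hn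
      linarith
    field_simp
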